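/- For every ε ∈ (0,1), α ∈ [0,1), and β ≥ 1, sup_{t>0} ∫_0^t (ت/s)^{1−ε} e^{−β(t−s)} (t−s)^{−α} ds ≤ (2Γ(1−α)+1) / ((1−α) ε β^{1−α}), where Γ is the Gamma function. (Here the integrand has t/s raised to the power 1−ε.) -/

import Mathlib

open Real intervalIntegral MeasureTheory Set

private lemma rpow_exp_le (c : ℝ) (hc0 : 0 < c) {x : ℝ} (hx : 0 ≤ x) :
    x ^ c * Real.exp (-x) ≤ c ^ c * Real.exp (-c) := by
  rcases eq_or_lt_of_le hx with h | h
  · rw [← h, Real.zero_rpow hc0.ne', zero_mul]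
    positivity
  · rw [Real.rpow_def_of_pos h, Real.rpow_def_of_pos hc0, ← Real.exp_add, ← Real.exp_add,
      Real.exp_le_exp]
    have h1 : Real.log (x / c) ≤ x / c - 1 := Real.log_le_sub_one_of_pos (by positivity)
    rw [Real.log_div h.ne' hc0.ne'] at h1
    have h2 : c * (Real.log x - Real.log c) ≤ c * (x / c - 1) :=
      mul_le_mul_of_nonneg_left h1 hc0.le
    have h3 : c * (x / c - 1) = x - c := by field_simp
    nlinarith

private lemma c_rpow_exp_le (c : ℝ) (hc0 : 0 < c) (hc1 : c ≤ 1) :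
    c * (c ^ c * Real.exp (-c)) ≤ Real.exp (-1) := by
  have h1 : Real.log c ≤ c - 1 := Real.log_le_sub_one_of_pos hc0
  have h2 : Real.log c ≤ 0 := Real.log_nonpos hc0.le hc1
  have h3 : c ^ c = Real.exp (Real.log c * c) := Real.rpow_def_of_pos hc0 c
  calc c * (c ^ c * Real.exp (-c))
      = Real.exp (Real.log c) * (Real.exp (Real.log c * c) * Real.exp (-c)) := by
        rw [Real.exp_log hc0, h3]
    _ = Real.exp (Real.log c + (Real.log c * c + -c)) := by rw [Real.exp_add, Real.exp_add]
    _ ≤ Real.exp (-1) := by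
        rw [Real.exp_le_exp]
        nlinarith [mul_nonpos_of_nonpos_of_nonneg h2 hc0.le]

theorem sup_integral_bound (ε α β : ℝ) (hε0 : 0 < ε) (hε1 : ε < 1)
    (hα0 : 0 ≤ α) (hα1 : α < 1) (hβ : 1 ≤ β) (t : ℝ) (ht : 0 < t) :
    ∫ s in (0:ℝ)..t, (t / s) ^ (1 - ε) * (Real.exp (-β * (t - s)) / (t - s) ^ α)
      ≤ (2 * Real.Gamma (1 - α) + 1) / ((1 - α) * ε * β ^ (1 - α)) := by
  have hα : 0 < 1 - α := by linarith
  have hβ0 : 0 < β := lt_of_lt_of_le one_pos hβ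
  have hβα : 0 < β ^ (1 - α) := Real.rpow_pos_of_pos hβ0 _
  have hΓ : 0 < Real.Gamma (1 - α) := Real.Gamma_pos_of_pos hα
  have hRHS : 0 ≤ (2 * Real.Gamma (1 - α) + 1) / ((1 - α) * ε * β ^ (1 - α)) := by positivity
  set f : ℝ → ℝ := fun s => (t / s) ^ (1 - ε) * (Real.exp (-β * (t - s)) / (t - s) ^ α) with hfdef
  by_cases hf : IntervalIntegrable f MeasureTheory.volume 0 t
  swap
  · rw [intervalIntegral.integral_undef hf]; exact hRHS
  have ht2 : 0 < t / 2 := by positivity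
  have hf1 : IntervalIntegrable f MeasureTheory.volume 0 (t / 2) :=
    hf.mono_set (Set.uIcc_subset_uIcc (by simp) (by
      rw [Set.mem_uIcc]; left; constructor <;> linarith))
  have hf2 : IntervalIntegrable f MeasureTheory.volume (t / 2) t :=
    hf.mono_set (Set.uIcc_subset_uIcc (by
      rw [Set.mem_uIcc]; left; constructor <;> linarith) (by simp [Set.mem_uIcc, ht.le]))
  rw [← intervalIntegral.integral_add_adjacent_intervals hf1 hf2]
  have hb1 : ∫ s in (0:ℝ)..(t / 2), f s ≤ 1 / ((1 - α) * ε * β ^ (1 - α)) := by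
    set C : ℝ := t ^ (1 - ε) * (Real.exp (-β * (t / 2)) / (t / 2) ^ α) with hC
    have hg1 : IntervalIntegrable (fun s => C * s ^ (ε - 1)) MeasureTheory.volume 0 (t / 2) :=
      (intervalIntegral.intervalIntegrable_rpow' (by linarith)).const_mul C
    have hmono : ∫ s in (0:ℝ)..(t / 2), f s ≤ ∫ s in (0:ℝ)..(t / 2), C * s ^ (ε - 1) := by
      apply intervalIntegral.integral_mono_on ht2.le hf1 hg1
      intro s hs
      obtain ⟨hs0, hs2⟩ := hs
      rcases eq_or_lt_of_le hs0 with h | h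
      · rw [hfdef, ← h]
        simp [Real.zero_rpow (by linarith : (1:ℝ) - ε ≠ 0),
          Real.zero_rpow (by linarith : ε - 1 ≠ 0)]
      · have hts : (t / s) ^ (1 - ε) = t ^ (1 - ε) * s ^ (ε - 1) := by
          rw [Real.div_rpow ht.le h.le, div_eq_mul_inv, ← Real.rpow_neg h.le, neg_sub]
        have hE : Real.exp (-β * (t - s)) / (t - s) ^ α
            ≤ Real.exp (-β * (t / 2)) / (t / 2) ^ α := by
          apply div_le_div₀ (Real.exp_pos _).le _ (Real.rpow_pos_of_pos ht2 _)
            (Real.rpow_le_rpow ht2.le (by linarith) hα0)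
          exact Real.exp_le_exp.2 (by nlinarith)
        calc f s = (t ^ (1 - ε) * s ^ (ε - 1)) * (Real.exp (-β * (t - s)) / (t - s) ^ α) := by
              rw [hfdef]; simp only; rw [hts]
          _ ≤ (t ^ (1 - ε) * s ^ (ε - 1)) * (Real.exp (-β * (t / 2)) / (t / 2) ^ α) := by
              apply mul_le_mul_of_nonneg_left hE
              positivity
          _ = C * s ^ (ε - 1) := by rw [hC]; ring
    have hval : ∫ s in (0:ℝ)..(t / 2), C * s ^ (ε - 1) = C * ((t / 2) ^ ε / ε) := by
      rw [intervalIntegral.integral_const_mul, integral_rpow (Or.inl (by linarith))]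
      rw [Real.zero_rpow (by linarith : ε - 1 + 1 ≠ 0)]
      ring_nf
    have key : C * ((t / 2) ^ ε / ε) ≤ 1 / ((1 - α) * ε * β ^ (1 - α)) := by
      have e1 : t ^ (1 - ε) = 2 ^ (1 - ε) * (t / 2) ^ (1 - ε) := by
        rw [← Real.mul_rpow (by norm_num) ht2.le]
        congr 1; ring
      have e2 : (t / 2) ^ (1 - ε) * (t / 2) ^ ε = t / 2 := by
        rw [← Real.rpow_add ht2]; norm_num
      have e3 : (t / 2) ^ ((1:ℝ) - α) = (t / 2) / (t / 2) ^ α := by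
        rw [Real.rpow_sub ht2, Real.rpow_one]
      have e4 : (t / 2) ^ ((1:ℝ) - α) = (β * (t / 2)) ^ (1 - α) / β ^ (1 - α) := by
        rw [← Real.div_rpow (by positivity) hβ0.le]
        congr 1
        field_simp
      set A : ℝ := (β * (t / 2)) ^ (1 - α) * Real.exp (-(β * (t / 2))) with hA
      have hmain : C * (t / 2) ^ ε = 2 ^ (1 - ε) * A / β ^ (1 - α) := by
        calc C * (t / 2) ^ ε
            = 2 ^ (1 - ε) * ((t / 2) ^ (1 - ε) * (t / 2) ^ ε) *
              (Real.exp (-β * (t / 2)) / (t / 2) ^ α) := by rw [hC, e1]; ring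
          _ = 2 ^ (1 - ε) * ((t / 2) / (t / 2) ^ α) * Real.exp (-(β * (t / 2))) := by
              rw [e2, neg_mul]; ring
          _ = 2 ^ (1 - ε) * A / β ^ (1 - α) := by rw [← e3, e4, hA]; ring
      have hfinal : 2 ^ (1 - ε) * A ≤ 1 / (1 - α) := by
        have h2 : (2:ℝ) ^ (1 - ε) ≤ 2 := by
          calc (2:ℝ) ^ (1 - ε) ≤ 2 ^ (1:ℝ) :=
                Real.rpow_le_rpow_of_exponent_le one_le_two (by linarith)
            _ = 2 := Real.rpow_one 2
        have hAnn : 0 ≤ A := by positivity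
        have hE : A ≤ (1 - α) ^ (1 - α) * Real.exp (-(1 - α)) :=
          rpow_exp_le (1 - α) hα (by positivity)
        have hG := c_rpow_exp_le (1 - α) hα (by linarith)
        have h2e : Real.exp (-1) ≤ 1 / 2 := by
          have hm : Real.exp (-1) * Real.exp 1 = 1 := by rw [← Real.exp_add]; norm_num
          nlinarith [Real.exp_pos (-1), Real.exp_one_gt_d9]
        have hB : (1 - α) ^ (1 - α) * Real.exp (-(1 - α)) ≤ Real.exp (-1) / (1 - α) := by
          rw [le_div_iff₀ hα, mul_comm]; exact hG
        calc 2 ^ (1 - ε) * A ≤ 2 * ((1 - α) ^ (1 - α) * Real.exp (-(1 - α))) :=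
              mul_le_mul h2 hE hAnn (by norm_num)
          _ ≤ 2 * (Real.exp (-1) / (1 - α)) := by
              exact mul_le_mul_of_nonneg_left hB (by norm_num)
          _ = 2 * Real.exp (-1) * (1 / (1 - α)) := by ring
          _ ≤ 1 * (1 / (1 - α)) := mul_le_mul_of_nonneg_right (by linarith) (by positivity)
          _ = 1 / (1 - α) := one_mul _
      calc C * ((t / 2) ^ ε / ε) = (C * (t / 2) ^ ε) / ε := by ring
        _ = (2 ^ (1 - ε) * A / β ^ (1 - α)) / ε := by rw [hmain]
        _ ≤ ((1 / (1 - α)) / β ^ (1 - α)) / ε := by gcongr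
        _ = 1 / ((1 - α) * ε * β ^ (1 - α)) := by
            rw [div_div, div_div, one_div, one_div]
            ring_nf
    exact hmono.trans (hval ▸ key)
  have hb2 : ∫ s in (t / 2)..t, f s ≤
      2 * Real.Gamma (1 - α) / ((1 - α) * ε * β ^ (1 - α)) := by
    set F : ℝ → ℝ := fun u => Real.exp (-β * u) / u ^ α with hF
    have hFint : IntervalIntegrable F MeasureTheory.volume 0 (t / 2) := by
      have h1 : IntervalIntegrable (fun u => Real.exp (-β * u) * u ^ (-α))
          MeasureTheory.volume 0 (t / 2) :=
        (intervalIntegral.intervalIntegrable_rpow' (by linarith)).continuousOn_mul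
          (Continuous.continuousOn (by fun_prop))
      rw [intervalIntegrable_iff] at h1 ⊢
      apply h1.congr_fun ?_ measurableSet_uIoc
      intro u hu
      rw [Set.uIoc_of_le ht2.le] at hu
      rw [hF]
      simp only
      rw [Real.rpow_neg hu.1.le, div_eq_mul_inv]
    have hg2int : IntervalIntegrable (fun s => 2 * F (t - s)) MeasureTheory.volume (t / 2) t := by
      have h := (hFint.comp_sub_left t).symm
      rw [show t - t / 2 = t / 2 by ring, sub_zero] at h
      exact h.const_mul 2
    have hmono : ∫ s in (t / 2)..t, f s ≤ ∫ s in (t / 2)..t, 2 * F (t - s) := by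
      apply intervalIntegral.integral_mono_on (by linarith) hf2 hg2int
      intro s hs
      obtain ⟨hs1, hs2⟩ := hs
      have hs0 : 0 < s := lt_of_lt_of_le ht2 hs1
      have hE : 0 ≤ Real.exp (-β * (t - s)) / (t - s) ^ α :=
        div_nonneg (Real.exp_pos _).le (Real.rpow_nonneg (by linarith) _)
      have h2 : (t / s) ^ (1 - ε) ≤ 2 := by
        calc (t / s) ^ (1 - ε) ≤ 2 ^ (1 - ε) :=
              Real.rpow_le_rpow (by positivity) (by rw [div_le_iff₀ hs0]; linarith) (by linarith)
          _ ≤ 2 ^ (1:ℝ) := Real.rpow_le_rpow_of_exponent_le one_le_two (by linarith)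
          _ = 2 := Real.rpow_one 2
      rw [hfdef, hF]
      simp only
      exact mul_le_mul_of_nonneg_right h2 hE
    have hcomp : ∫ s in (t / 2)..t, 2 * F (t - s) = 2 * ∫ u in (0:ℝ)..(t / 2), F u := by
      rw [intervalIntegral.integral_const_mul]
      congr 1
      rw [intervalIntegral.integral_comp_sub_left F t, sub_self,
        show t - t / 2 = t / 2 by ring]
    set G : ℝ → ℝ := fun u => u ^ ((1 - α) - 1) * Real.exp (-(β * u)) with hG
    have hGint : IntegrableOn G (Set.Ioi 0) := by
      apply MeasureTheory.Integrable.mono (Real.GammaIntegral_convergent hα)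
      · apply ContinuousOn.aestronglyMeasurable _ measurableSet_Ioi
        apply ContinuousOn.mul
        · exact continuousOn_id.rpow_const fun x hx => Or.inl (ne_of_gt hx)
        · exact (Real.continuous_exp.comp (continuous_const.mul continuous_id).neg).continuousOn
      · rw [ae_restrict_iff' measurableSet_Ioi]
        filter_upwards with u hu
        rw [Set.mem_Ioi] at hu
        rw [Real.norm_eq_abs, Real.norm_eq_abs, abs_of_nonneg (by positivity),
          abs_of_nonneg (by positivity)]
        rw [hG]
        simp only
        rw [mul_comm]
        apply mul_le_mul_of_nonneg_right _ (Real.rpow_nonneg hu.le _)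
        exact Real.exp_le_exp.2 (by nlinarith)
    have hIoc : ∫ u in (0:ℝ)..(t / 2), F u ≤ (1 / β) ^ (1 - α) * Real.Gamma (1 - α) := by
      rw [intervalIntegral.integral_of_le ht2.le]
      have hcong : ∫ u in Set.Ioc (0:ℝ) (t / 2), F u = ∫ u in Set.Ioc (0:ℝ) (t / 2), G u := by
        apply setIntegral_congr_fun measurableSet_Ioc
        intro u hu
        rw [hF, hG]
        simp only
        rw [show (1 - α) - 1 = -α by ring, Real.rpow_neg hu.1.le, neg_mul, mul_comm,
          div_eq_mul_inv]
        ring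
      rw [hcong, ← Real.integral_rpow_mul_exp_neg_mul_Ioi hα hβ0]
      apply setIntegral_mono_set hGint
      · refine Filter.eventually_of_mem (self_mem_ae_restrict measurableSet_Ioi) fun u hu => ?_
        rw [Set.mem_Ioi] at hu
        simp only [Pi.zero_apply, hG]
        positivity
      · exact (Set.Ioc_subset_Ioi_self).eventuallyLE
    calc ∫ s in (t / 2)..t, f s ≤ 2 * ∫ u in (0:ℝ)..(t / 2), F u := by rw [← hcomp]; exact hmono
      _ ≤ 2 * ((1 / β) ^ (1 - α) * Real.Gamma (1 - α)) := by linarith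
      _ = 2 * Real.Gamma (1 - α) / β ^ (1 - α) := by
          rw [one_div, Real.inv_rpow hβ0.le]
          ring
      _ ≤ 2 * Real.Gamma (1 - α) / ((1 - α) * ε * β ^ (1 - α)) := by
          apply div_le_div_of_nonneg_left (by positivity) (by positivity)
          have h1 : (1 - α) * ε ≤ 1 := by nlinarith
          nlinarith [mul_le_mul_of_nonneg_right h1 hβα.le]
  calc (∫ s in (0:ℝ)..(t / 2), f s) + ∫ s in (t / 2)..t, f s
      ≤ 1 / ((1 - α) * ε * β ^ (1 - α)) +
        2 * Real.Gamma (1 - α) / ((1 - α) * ε * β ^ (1 - α)) := add_le_add hb1 hb2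
    _ = (2 * Real.Gamma (1 - α) + 1) / ((1 - α) * ε * β ^ (1 - α)) := by
        rw [← add_div, add_comm]
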